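/- Let D be a nonzero real number and let x be a real number with x ≠ D and 4x ≠ 5D. Then T_D(x) ≠ D, and 1/(T_D(x) − D) = 1/(x − D) − 4/D. In other words, under the coordinate change S(x) = 1/(x − D), the transformation T_D becomes the translation u ↦ u − 4/D. -/

import Mathlib

/-- For a nonzero real `D` and real `x` with `x ≠ D` and `4x ≠ 5D`, the linear fractional
transformation `T_D(x) = D(3x − 4D)/(4x − 5D)` satisfies `T_D(x) ≠ D` and
`1/(T_D(x) − D) = 1/(x − D) − 4/D`: under the coordinate change `S(x) = 1/(x − D)`,
`T_D` becomes the translation `u ↦ u − 4/D`. -/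
theorem stmt_11 (D : ℝ) (hD : D ≠ 0) (x : ℝ) (hxD : x ≠ D) (hx : 4 * x ≠ 5 * D) :
    D * (3 * x - 4 * D) / (4 * x - 5 * D) ≠ D ∧
    1 / (D * (3 * x - 4 * D) / (4 * x - 5 * D) - D) = 1 / (x - D) - 4 / D := by
  have h4 : 4 * x - 5 * D ≠ 0 := sub_ne_zero.mpr hx
  have hxD' : x - D ≠ 0 := sub_ne_zero.mpr hxD
  have key : D * (3 * x - 4 * D) / (4 * x - 5 * D) - D = D * (D - x) / (4 * x - 5 * D) := by
    rw [eq_div_iff h4, sub_mul, div_mul_cancel₀ _ h4]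
    ring
  have hne : D * (D - x) / (4 * x - 5 * D) ≠ 0 :=
    div_ne_zero (mul_ne_zero hD (sub_ne_zero.mpr (Ne.symm hxD))) h4
  refine ⟨fun h => hne (key ▸ sub_eq_zero.mpr h), ?_⟩
  rw [key, one_div, inv_div]
  rw [div_eq_iff (mul_ne_zero hD (sub_ne_zero.mpr (Ne.symm hxD)))]
  field_simp
  ring
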